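/- Let (X_t) be a positive strong Markov process with no negative jumps, and let T_b = inf{t ≥ 0 : X_t < b}. If for all sufficiently large b, sup_{x ≥ b} E_x[T_b] < ∞, then lim_{b→∞} lim_{x→∞} E_x[T_b] = 0. -/

import Mathlib

open MeasureTheory Filter Topology ENNReal

/-- For a positive strong Markov process with no negative jumps, with `e b x = E_x[T_b]`
the expected first passage time below `b` starting from `x`: `e b x` is nondecreasing in
`x`, nonincreasing in `b`, satisfies the renewal identity
`E_x[T_b] = E_x[T_{x'}] + E_{x'}[T_b]` for `x > x' > b`.  If for all sufficiently large
`b` one has `sup_{x ≥ b} E_x[T_b] < ∞`, then `lim_{b→∞} lim_{x→∞} E_x[T_b] = 0`. -/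
theorem stmt_4 (e : ℝ → ℝ → ℝ≥0∞)
    (hmono : ∀ b, Monotone (e b))
    (hanti : ∀ x, Antitone (fun b => e b x))
    (hrenewal : ∀ b x' x, b < x' → x' < x → e b x = e x' x + e b x')
    (hfin : ∃ b₀ : ℝ, ∀ b, b₀ ≤ b → (⨆ (x : ℝ) (_ : b ≤ x), e b x) < ⊤) :
    ∃ L : ℝ → ℝ≥0∞,
      (∀ b : ℝ, Tendsto (fun x => e b x) atTop (𝓝 (L b))) ∧
        Tendsto L atTop (𝓝 0) := by
  set L : ℝ → ℝ≥0∞ := fun b => ⨆ x, e b x with hL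
  have hLanti : Antitone L := fun b b' h => iSup_mono fun x => hanti x h
  have h1 : ∀ b, Tendsto (fun x => e b x) atTop (𝓝 (L b)) :=
    fun b => tendsto_atTop_iSup (hmono b)
  -- key identity: for b < x', L b = L x' + e b x'
  have hkey : ∀ b x', b < x' → L b = L x' + e b x' := by
    intro b x' hbx'
    apply le_antisymm
    · refine iSup_le fun x => ?_
      rcases lt_or_ge x' x with h | h
      · rw [hrenewal b x' x hbx' h]
        exact add_le_add_left (le_iSup _ x) _
      · have : e b x ≤ e b (x' + 1) := hmono b (h.trans (by linarith))
        rw [hrenewal b x' (x' + 1) hbx' (by linarith)] at this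
        exact this.trans (add_le_add_left (le_iSup _ (x' + 1)) _)
    · rw [ENNReal.iSup_add]
      refine iSup_le fun x => ?_
      have hx : e x' x ≤ e x' (max x x' + 1) :=
        hmono x' ((le_max_left x x').trans (by linarith))
      calc e x' x + e b x' ≤ e x' (max x x' + 1) + e b x' := add_le_add_left hx _
        _ = e b (max x x' + 1) :=
            (hrenewal b x' (max x x' + 1) hbx'
              (lt_of_le_of_lt (le_max_right x x') (by linarith))).symm
        _ ≤ L b := le_iSup _ _
  obtain ⟨b₀, hb₀⟩ := hfin
  have hLfin : ∀ b, b₀ ≤ b → L b < ⊤ := by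
    intro b hb
    refine lt_of_le_of_lt ?_ (hb₀ b hb)
    refine iSup_le fun x => ?_
    have : e b x ≤ e b (max x b) := hmono b (le_max_left x b)
    exact this.trans (le_iSup₂ (f := fun y (_ : b ≤ y) => e b y) (max x b) (le_max_right x b))
  set ℓ : ℝ≥0∞ := ⨅ b, L b with hℓ
  have h2 : Tendsto L atTop (𝓝 ℓ) := tendsto_atTop_iInf hLanti
  have hℓ0 : ℓ = 0 := by
    have hLb : L b₀ ≠ ⊤ := (hLfin b₀ le_rfl).ne
    have ht : Tendsto (fun x' => L x' + e b₀ x') atTop (𝓝 (ℓ + L b₀)) :=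
      h2.add (h1 b₀)
    have heq : (fun x' => L x' + e b₀ x') =ᶠ[atTop] fun _ => L b₀ := by
      filter_upwards [eventually_gt_atTop b₀] with x' hx'
      exact (hkey b₀ x' hx').symm
    have := tendsto_nhds_unique (ht.congr' heq) tendsto_const_nhds
    have h0 : ℓ + L b₀ = 0 + L b₀ := by rw [this, zero_add]
    exact (ENNReal.add_left_inj hLb).mp h0
  exact ⟨L, h1, hℓ0 ▸ h2⟩
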